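/- arXiv:2111.04363 — 4 statements merged into one kernel-verified Lean document; each statement's English description precedes it below -/
import Mathlib

section
/- For any connected graphs G and H of orders n ≥ 3 and m ≥ 3, the restrained double Roman domination number of the strong product satisfies γ_rdR(G ⊠ H) ≤ 2nm − 2. -/
open SimpleGraph Finset

/-- A restrained double Roman dominating function. -/
def IsRDRD {α : Type*} (G : SimpleGraph α) (f : α → ℕ) : Prop :=
  (∀ v, f v ≤ 3) ∧
  (∀ v, f v = 0 →
    (∃ u, G.Adj v u ∧ f u = 3) ∨
    (∃ u w, u ≠ w ∧ G.Adj v u ∧ G.Adj v w ∧ f u = 2 ∧ f w = 2)) ∧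
  (∀ v, f v = 1 → ∃ u, G.Adj v u ∧ 2 ≤ f u) ∧
  (∀ v, f v = 0 → ∃ u, G.Adj v u ∧ f u = 0)

/-- The restrained double Roman domination number. -/
noncomputable def gammaRdR {α : Type*} (G : SimpleGraph α) [Fintype α] : ℕ :=
  sInf {w | ∃ f, IsRDRD G f ∧ ∑ v, f v = w}

/-- The strong product of two simple graphs. -/
def strongProd {α β : Type*} (G : SimpleGraph α) (H : SimpleGraph β) :
    SimpleGraph (α × β) where
  Adj p q := p ≠ q ∧ (G.Adj p.1 q.1 ∨ p.1 = q.1) ∧ (H.Adj p.2 q.2 ∨ p.2 = q.2)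
  symm := by
    constructor
    rintro p q ⟨h1, h2, h3⟩
    exact ⟨h1.symm, h2.imp (fun h => h.symm) Eq.symm, h3.imp (fun h => h.symm) Eq.symm⟩
  loopless := by constructor; rintro p ⟨h1, _⟩; exact h1 rfl

/-- The cardinal (direct/tensor) product of two simple graphs. -/
def cardProd {α β : Type*} (G : SimpleGraph α) (H : SimpleGraph β) :
    SimpleGraph (α × β) where
  Adj p q := G.Adj p.1 q.1 ∧ H.Adj p.2 q.2
  symm := by constructor; rintro p q ⟨h1, h2⟩; exact ⟨h1.symm, h2.symm⟩
  loopless := by constructor; rintro p ⟨h1, _⟩; exact G.irrefl h1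

/-- The corona of two simple graphs. -/
def corona {α β : Type*} (G : SimpleGraph α) (H : SimpleGraph β) :
    SimpleGraph (α ⊕ α × β) where
  Adj x y :=
    match x, y with
    | .inl u, .inl v => G.Adj u v
    | .inl u, .inr (v, _) => u = v
    | .inr (v, _), .inl u => u = v
    | .inr (u, a), .inr (v, b) => u = v ∧ H.Adj a b
  symm := by
    constructor
    rintro (u | ⟨u, a⟩) (v | ⟨v, b⟩) h
    · exact h.symm
    · exact h
    · exact h
    · exact ⟨h.1.symm, h.2.symm⟩
  loopless := by
    constructor
    rintro (u | ⟨u, a⟩) h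
    · exact G.irrefl h
    · exact H.irrefl h.2

lemma exists_edge_aux {α : Type*} [Fintype α] (G : SimpleGraph α) (hG : G.Connected)
    (hn : 2 ≤ Fintype.card α) : ∃ a a', G.Adj a a' := by
  have : Nontrivial α := Fintype.one_lt_card_iff_nontrivial.mp hn
  obtain ⟨x, y, hxy⟩ := this.exists_pair_ne
  obtain ⟨w⟩ := hG.preconnected x y
  cases w with
  | nil => exact absurd rfl hxy
  | cons h _ => exact ⟨_, _, h⟩

theorem stmt0 {α β : Type*} [Fintype α] [Fintype β]
    (G : SimpleGraph α) (H : SimpleGraph β)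
    (hG : G.Connected) (hH : H.Connected)
    (hn : 3 ≤ Fintype.card α) (hm : 3 ≤ Fintype.card β) :
    gammaRdR (strongProd G H) ≤ 2 * Fintype.card α * Fintype.card β - 2 := by
  classical
  obtain ⟨a, a', ha⟩ := exists_edge_aux G hG (by omega)
  obtain ⟨b, b', hb⟩ := exists_edge_aux H hH (by omega)
  have haa : a ≠ a' := ha.ne
  have hbb : b ≠ b' := hb.ne
  set f : α × β → ℕ := fun p => if p = (a, b) ∨ p = (a', b) then 0 else 2 with hf
  have hf0 : ∀ p, p = (a, b) ∨ p = (a', b) → f p = 0 := by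
    intro p hp; simp [hf, hp]
  have hf2 : ∀ p : α × β, ¬(p = (a, b) ∨ p = (a', b)) → f p = 2 := by
    intro p hp; simp [hf, hp]
  have hrdrd : IsRDRD (strongProd G H) f := by
    refine ⟨?_, ?_, ?_, ?_⟩
    · intro v; by_cases hv : v = (a, b) ∨ v = (a', b)
      · simp [hf0 v hv]
      · simp [hf2 v hv]
    · intro v hv
      right
      by_cases hv' : v = (a, b) ∨ v = (a', b)
      · refine ⟨(a, b'), (a', b'), by simp [haa], ?_, ?_, ?_, ?_⟩
        · rcases hv' with rfl | rfl
          · exact ⟨by simp [hbb], Or.inr rfl, Or.inl hb⟩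
          · exact ⟨by simp [hbb], Or.inl ha.symm, Or.inl hb⟩
        · rcases hv' with rfl | rfl
          · exact ⟨by simp [hbb], Or.inl ha, Or.inl hb⟩
          · exact ⟨by simp [hbb], Or.inr rfl, Or.inl hb⟩
        · exact hf2 _ (by simp [Ne.symm hbb])
        · exact hf2 _ (by simp [Ne.symm hbb])
      · exact absurd (hf2 v hv') (by omega)
    · intro v hv
      by_cases hv' : v = (a, b) ∨ v = (a', b)
      · exact absurd (hf0 v hv') (by omega)
      · exact absurd (hf2 v hv') (by omega)
    · intro v hv
      by_cases hv' : v = (a, b) ∨ v = (a', b)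
      · rcases hv' with rfl | rfl
        · exact ⟨(a', b), ⟨by simp [haa], Or.inl ha, Or.inr rfl⟩, hf0 _ (Or.inr rfl)⟩
        · exact ⟨(a, b), ⟨by simp [Ne.symm haa], Or.inl ha.symm, Or.inr rfl⟩, hf0 _ (Or.inl rfl)⟩
      · exact absurd (hf2 v hv') (by omega)
  have hmem : (∑ v, f v) ∈ {w | ∃ g, IsRDRD (strongProd G H) g ∧ ∑ v, g v = w} :=
    ⟨f, hrdrd, rfl⟩
  refine le_trans (Nat.sInf_le hmem) ?_
  have hle : ∀ p : α × β, f p ≤ (fun p => if p = (a, b) then 0 else 2) p := by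
    intro p
    by_cases hp : p = (a, b) ∨ p = (a', b)
    · by_cases hp' : p = (a, b)
      · subst hp'; simp [hf0 _ hp]
      · simp [hf0 p hp, hp']
    · have : p ≠ (a, b) := fun h => hp (Or.inl h)
      simp [hf2 p hp, this]
  calc ∑ v, f v ≤ ∑ v : α × β, (fun p => if p = (a, b) then 0 else 2) v :=
        Finset.sum_le_sum (fun v _ => hle v)
    _ = ∑ v ∈ (Finset.univ : Finset (α × β)).erase (a, b), 2 := by
        rw [← Finset.sum_erase_add _ _ (Finset.mem_univ ((a, b) : α × β)), if_pos rfl,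
          add_zero]
        exact Finset.sum_congr rfl (fun v hv => if_neg (Finset.ne_of_mem_erase hv))
    _ ≤ 2 * Fintype.card α * Fintype.card β - 2 := by
        rw [Finset.sum_const, smul_eq_mul, Finset.card_erase_of_mem (Finset.mem_univ _)]
        simp only [Finset.card_univ, Fintype.card_prod]
        have h1 : 1 ≤ Fintype.card α * Fintype.card β :=
          Nat.one_le_iff_ne_zero.mpr (by positivity)
        rw [mul_assoc]
        generalize Fintype.card α * Fintype.card β = N at h1 ⊢
        omega
end

section
/- Let f be a minimum-weight RDRD-function of P_n ⊠ P_m with n ∈ {2,3}, and let f_j denote the total weight of the j-th column. Then f_{j−1} + f_j + f_{j+1} ≥ 3 for all 1 ≤ j ≤ m−2, and f_0 + f_1 ≥ 3 and f_{m−2} + f_{m−1} ≥ 3. -/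
open SimpleGraph Finset

lemma key_sum {n m : ℕ} (hn : 2 ≤ n) (f : Fin n × Fin m → ℕ)
    (hf : IsRDRD (strongProd (SimpleGraph.pathGraph n) (SimpleGraph.pathGraph m)) f)
    (j : Fin m) :
    3 ≤ ∑ p ∈ univ.filter
        (fun p : Fin n × Fin m => p.2.val ≤ j.val + 1 ∧ j.val ≤ p.2.val + 1), f p := by
  set T := univ.filter
      (fun p : Fin n × Fin m => p.2.val ≤ j.val + 1 ∧ j.val ≤ p.2.val + 1) with hT
  have hmem : ∀ (i : Fin n) (q : Fin n × Fin m),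
      (strongProd (SimpleGraph.pathGraph n) (SimpleGraph.pathGraph m)).Adj (i, j) q →
      q ∈ T := by
    rintro i q ⟨_, _, hcol⟩
    simp only [hT, mem_filter, mem_univ, true_and]
    rcases hcol with h | h
    · rw [SimpleGraph.pathGraph_adj] at h
      have h' : j.val + 1 = q.2.val ∨ q.2.val + 1 = j.val := h
      omega
    · rw [show q.2 = j from h.symm]; omega
  have hpair : ∀ a b : Fin n × Fin m, a ∈ T → b ∈ T → a ≠ b →
      f a + f b ≤ ∑ p ∈ T, f p := by
    intro a b ha hb hab
    calc f a + f b = ∑ p ∈ ({a, b} : Finset _), f p := (Finset.sum_pair hab).symm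
    _ ≤ ∑ p ∈ T, f p := Finset.sum_le_sum_of_subset (by
        intro x hx
        simp only [mem_insert, mem_singleton] at hx
        rcases hx with rfl | rfl <;> assumption)
  have hsingle : ∀ a : Fin n × Fin m, a ∈ T → f a ≤ ∑ p ∈ T, f p := by
    intro a ha
    exact Finset.single_le_sum (fun _ _ => Nat.zero_le _) ha
  set v0 : Fin n × Fin m := (⟨0, by omega⟩, j) with hv0
  set v1 : Fin n × Fin m := (⟨1, by omega⟩, j) with hv1
  have hv0T : v0 ∈ T := by simp [hT, hv0]
  have hv1T : v1 ∈ T := by simp [hT, hv1]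
  have hv01 : v0 ≠ v1 := by
    intro h
    have := congrArg (fun p : Fin n × Fin m => p.1.val) h
    simp [hv0, hv1] at this
  obtain ⟨h3, h0, h1, _⟩ := hf
  have hle := h3 v0
  have hcases : f v0 = 0 ∨ f v0 = 1 ∨ f v0 = 2 ∨ f v0 = 3 := by omega
  rcases hcases with h | h | h | h
  · rcases h0 v0 h with ⟨u, hadj, hu⟩ | ⟨u, w, huw, hadju, hadjw, hu, hw⟩
    · have := hsingle u (hmem _ _ hadj); omega
    · have := hpair u w (hmem _ _ hadju) (hmem _ _ hadjw) huw; omega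
  · obtain ⟨u, hadj, hu⟩ := h1 v0 h
    have hne : v0 ≠ u := hadj.1
    have := hpair v0 u hv0T (hmem _ _ hadj) hne; omega
  · -- f v0 = 2
    have hle1 := h3 v1
    have hcases1 : f v1 = 0 ∨ 1 ≤ f v1 := by omega
    rcases hcases1 with h1' | h1'
    · rcases h0 v1 h1' with ⟨u, hadj, hu⟩ | ⟨u, w, huw, hadju, hadjw, hu, hw⟩
      · have hne : v0 ≠ u := by intro he; rw [← he] at hu; omega
        have := hpair v0 u hv0T (hmem _ _ hadj) hne; omega
      · have := hpair u w (hmem _ _ hadju) (hmem _ _ hadjw) huw; omega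
    · have := hpair v0 v1 hv0T hv1T hv01; omega
  · have := hsingle v0 hv0T; omega

lemma key_col {n m : ℕ} (hn : 2 ≤ n) (f : Fin n × Fin m → ℕ)
    (hf : IsRDRD (strongProd (SimpleGraph.pathGraph n) (SimpleGraph.pathGraph m)) f)
    (j : Fin m) :
    3 ≤ ∑ j' ∈ univ.filter
        (fun j' : Fin m => j'.val ≤ j.val + 1 ∧ j.val ≤ j'.val + 1),
        ∑ i : Fin n, f (i, j') := by
  have h := key_sum hn f hf j
  refine le_trans h (le_of_eq ?_)
  rw [Finset.sum_filter]
  rw [Fintype.sum_prod_type_right]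
  rw [Finset.sum_filter]
  refine Finset.sum_congr rfl fun j' _ => ?_
  by_cases hc : j'.val ≤ j.val + 1 ∧ j.val ≤ j'.val + 1 <;> simp [hc]


lemma tri_bound {m : ℕ} (g : Fin m → ℕ) (jF a b c : Fin m)
    (hab : a ≠ b) (hac : a ≠ c) (hbc : b ≠ c)
    (hwin : ∀ x : Fin m, x.val ≤ jF.val + 1 → jF.val ≤ x.val + 1 →
      x = a ∨ x = b ∨ x = c)
    (hkey : 3 ≤ ∑ j' ∈ univ.filter
        (fun j' : Fin m => j'.val ≤ jF.val + 1 ∧ jF.val ≤ j'.val + 1), g j') :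
    3 ≤ g a + g b + g c := by
  have hsub : univ.filter
      (fun j' : Fin m => j'.val ≤ jF.val + 1 ∧ jF.val ≤ j'.val + 1) ⊆
      ({a, b, c} : Finset (Fin m)) := by
    intro x hx
    simp only [mem_filter, mem_univ, true_and] at hx
    simp only [mem_insert, mem_singleton]
    exact hwin x hx.1 hx.2
  have h2 := Finset.sum_le_sum_of_subset (f := g) hsub
  have hsum : ∑ j' ∈ ({a, b, c} : Finset (Fin m)), g j' = g a + (g b + g c) := by
    rw [Finset.sum_insert (by simp [hab, hac]), Finset.sum_pair hbc]
  omega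

lemma pair_bound {m : ℕ} (g : Fin m → ℕ) (jF a b : Fin m) (hab : a ≠ b)
    (hwin : ∀ x : Fin m, x.val ≤ jF.val + 1 → jF.val ≤ x.val + 1 →
      x = a ∨ x = b)
    (hkey : 3 ≤ ∑ j' ∈ univ.filter
        (fun j' : Fin m => j'.val ≤ jF.val + 1 ∧ jF.val ≤ j'.val + 1), g j') :
    3 ≤ g a + g b := by
  have hsub : univ.filter
      (fun j' : Fin m => j'.val ≤ jF.val + 1 ∧ jF.val ≤ j'.val + 1) ⊆
      ({a, b} : Finset (Fin m)) := by
    intro x hx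
    simp only [mem_filter, mem_univ, true_and] at hx
    simp only [mem_insert, mem_singleton]
    exact hwin x hx.1 hx.2
  have h2 := Finset.sum_le_sum_of_subset (f := g) hsub
  have hsum : ∑ j' ∈ ({a, b} : Finset (Fin m)), g j' = g a + g b :=
    Finset.sum_pair hab
  omega


lemma stmt5' (n m : ℕ) (hn : n = 2 ∨ n = 3) (hm : 2 ≤ m)
    (f : Fin n × Fin m → ℕ)
    (hf : IsRDRD (strongProd (SimpleGraph.pathGraph n) (SimpleGraph.pathGraph m)) f)
    (col : ℕ → ℕ)
    (hcol : ∀ j : Fin m, col j = ∑ i : Fin n, f (i, j)) :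
    (∀ j : ℕ, 1 ≤ j → j ≤ m - 2 → 3 ≤ col (j - 1) + col j + col (j + 1)) ∧
      3 ≤ col 0 + col 1 ∧ 3 ≤ col (m - 2) + col (m - 1) := by
  have hn2 : 2 ≤ n := by omega
  refine ⟨?_, ?_, ?_⟩
  · intro j hj1 hj2
    have hjm : j + 1 < m := by omega
    have h := tri_bound (fun j' => ∑ i : Fin n, f (i, j'))
      ⟨j, by omega⟩ ⟨j - 1, by omega⟩ ⟨j, by omega⟩ ⟨j + 1, by omega⟩
      (Fin.ne_of_val_ne (show j - 1 ≠ j by omega))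
      (Fin.ne_of_val_ne (show j - 1 ≠ j + 1 by omega))
      (Fin.ne_of_val_ne (show j ≠ j + 1 by omega))
      (fun x h1 h2 => by
        have h1' : x.val ≤ j + 1 := h1
        have h2' : j ≤ x.val + 1 := h2
        have hx := x.isLt
        have hv : x.val = j - 1 ∨ x.val = j ∨ x.val = j + 1 := by omega
        rcases hv with hv | hv | hv
        · exact Or.inl (Fin.ext hv)
        · exact Or.inr (Or.inl (Fin.ext hv))
        · exact Or.inr (Or.inr (Fin.ext hv)))
      (key_col hn2 f hf ⟨j, by omega⟩)
    have ha' : col (j - 1) = ∑ i : Fin n, f (i, (⟨j - 1, by omega⟩ : Fin m)) :=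
      hcol ⟨j - 1, by omega⟩
    have hb' : col j = ∑ i : Fin n, f (i, (⟨j, by omega⟩ : Fin m)) :=
      hcol ⟨j, by omega⟩
    have hc' : col (j + 1) = ∑ i : Fin n, f (i, (⟨j + 1, by omega⟩ : Fin m)) :=
      hcol ⟨j + 1, by omega⟩
    omega
  · have h := pair_bound (fun j' => ∑ i : Fin n, f (i, j'))
      ⟨0, by omega⟩ ⟨0, by omega⟩ ⟨1, by omega⟩
      (Fin.ne_of_val_ne (show 0 ≠ 1 by omega))
      (fun x h1 h2 => by
        have h1' : x.val ≤ 0 + 1 := h1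
        have hv : x.val = 0 ∨ x.val = 1 := by omega
        rcases hv with hv | hv
        · exact Or.inl (Fin.ext hv)
        · exact Or.inr (Fin.ext hv))
      (key_col hn2 f hf ⟨0, by omega⟩)
    have ha' : col 0 = ∑ i : Fin n, f (i, (⟨0, by omega⟩ : Fin m)) :=
      hcol ⟨0, by omega⟩
    have hb' : col 1 = ∑ i : Fin n, f (i, (⟨1, by omega⟩ : Fin m)) :=
      hcol ⟨1, by omega⟩
    omega
  · have h := pair_bound (fun j' => ∑ i : Fin n, f (i, j'))
      ⟨m - 1, by omega⟩ ⟨m - 2, by omega⟩ ⟨m - 1, by omega⟩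
      (Fin.ne_of_val_ne (show m - 2 ≠ m - 1 by omega))
      (fun x h1 h2 => by
        have h2' : m - 1 ≤ x.val + 1 := h2
        have hx := x.isLt
        have hv : x.val = m - 2 ∨ x.val = m - 1 := by omega
        rcases hv with hv | hv
        · exact Or.inl (Fin.ext hv)
        · exact Or.inr (Fin.ext hv))
      (key_col hn2 f hf ⟨m - 1, by omega⟩)
    have ha' : col (m - 2) = ∑ i : Fin n, f (i, (⟨m - 2, by omega⟩ : Fin m)) :=
      hcol ⟨m - 2, by omega⟩
    have hb' : col (m - 1) = ∑ i : Fin n, f (i, (⟨m - 1, by omega⟩ : Fin m)) :=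
      hcol ⟨m - 1, by omega⟩
    omega

theorem stmt5 (n m : ℕ) (hn : n = 2 ∨ n = 3) (hm : 2 ≤ m)
    (f : Fin n × Fin m → ℕ)
    (hf : IsRDRD (strongProd (SimpleGraph.pathGraph n) (SimpleGraph.pathGraph m)) f)
    (hmin : ∑ v, f v =
      gammaRdR (strongProd (SimpleGraph.pathGraph n) (SimpleGraph.pathGraph m)))
    (col : ℕ → ℕ)
    (hcol : ∀ j : Fin m, col j = ∑ i : Fin n, f (i, j)) :
    (∀ j : ℕ, 1 ≤ j → j ≤ m - 2 → 3 ≤ col (j - 1) + col j + col (j + 1)) ∧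
      3 ≤ col 0 + col 1 ∧ 3 ≤ col (m - 2) + col (m - 1) := by
  exact (stmt5' n m hn hm f hf col hcol : _)
end

section
/- For m ≥ 3, γ_rdR(C₃ × C_m) = 2m. -/
open SimpleGraph Finset

/-! ### Auxiliary machinery for `stmt10` -/

/-- Potential function on pairs of consecutive column sums. -/
def Fp' (x y : ℕ) : ℕ :=
  if x ≤ 1 then (if y = 0 then 2 else if y ≤ 2 then 3 else 4)
  else if x = 2 then (if y = 0 then 2 else if y ≤ 4 then 3 else 4)
  else if x = 3 then (if y ≤ 2 then 2 else if y ≤ 4 then 3 else 4)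
  else if x = 4 then (if y = 0 then 1 else if y ≤ 2 then 2 else if y ≤ 4 then 3 else 4)
  else if x = 5 then (if y ≤ 1 then 1 else if y = 2 then 2 else if y ≤ 4 then 3 else 4)
  else (if y = 0 then 0 else if y = 1 then 1 else if y = 2 then 2 else if y ≤ 4 then 3 else 4)

/-- Triples of consecutive column sums that can never occur. -/
def Bad' (x y z : ℕ) : Prop :=
  (y = 0 ∧ ((x ≤ 3 ∧ z ≤ 2) ∨ (z = 0 ∧ x ≤ 5))) ∨
  (y = 1 ∧ ((x ≤ 2 ∧ z ≤ 2) ∨ (z = 0 ∧ x ≤ 4))) ∨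
  (y = 2 ∧ x ≤ 2 ∧ z = 0) ∨ (y = 3 ∧ x ≤ 1 ∧ z ≤ 2) ∨ (y = 4 ∧ x ≤ 1 ∧ z = 0)

instance : ∀ x y z, Decidable (Bad' x y z) := by unfold Bad'; infer_instance

lemma arith' : ∀ x < 10, ∀ y < 10, ∀ z < 10, ¬ Bad' x y z → 2 + Fp' x y ≤ y + Fp' y z := by
  decide

set_option maxHeartbeats 4000000 in
lemma notBad' (a0 a1 a2 b0 b1 b2 c0 c1 c2 : ℕ)
    (ha0 : a0 ≤ 3) (ha1 : a1 ≤ 3) (ha2 : a2 ≤ 3)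
    (hb0 : b0 ≤ 3) (hb1 : b1 ≤ 3) (hb2 : b2 ≤ 3)
    (hc0 : c0 ≤ 3) (hc1 : c1 ≤ 3) (hc2 : c2 ≤ 3)
    (H00 : b0 = 0 → (a1 = 3 ∨ a2 = 3 ∨ c1 = 3 ∨ c2 = 3) ∨
      ((a1 = 2 ∧ a2 = 2) ∨ (a1 = 2 ∧ c1 = 2) ∨ (a1 = 2 ∧ c2 = 2) ∨
       (a2 = 2 ∧ c1 = 2) ∨ (a2 = 2 ∧ c2 = 2) ∨ (c1 = 2 ∧ c2 = 2)))
    (H01 : b1 = 0 → (a0 = 3 ∨ a2 = 3 ∨ c0 = 3 ∨ c2 = 3) ∨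
      ((a0 = 2 ∧ a2 = 2) ∨ (a0 = 2 ∧ c0 = 2) ∨ (a0 = 2 ∧ c2 = 2) ∨
       (a2 = 2 ∧ c0 = 2) ∨ (a2 = 2 ∧ c2 = 2) ∨ (c0 = 2 ∧ c2 = 2)))
    (H02 : b2 = 0 → (a0 = 3 ∨ a1 = 3 ∨ c0 = 3 ∨ c1 = 3) ∨
      ((a0 = 2 ∧ a1 = 2) ∨ (a0 = 2 ∧ c0 = 2) ∨ (a0 = 2 ∧ c1 = 2) ∨
       (a1 = 2 ∧ c0 = 2) ∨ (a1 = 2 ∧ c1 = 2) ∨ (c0 = 2 ∧ c1 = 2)))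
    (H10 : b0 = 1 → 2 ≤ a1 ∨ 2 ≤ a2 ∨ 2 ≤ c1 ∨ 2 ≤ c2)
    (H11 : b1 = 1 → 2 ≤ a0 ∨ 2 ≤ a2 ∨ 2 ≤ c0 ∨ 2 ≤ c2)
    (H12 : b2 = 1 → 2 ≤ a0 ∨ 2 ≤ a1 ∨ 2 ≤ c0 ∨ 2 ≤ c1) :
    ¬ Bad' (a0 + a1 + a2) (b0 + b1 + b2) (c0 + c1 + c2) := by
  unfold Bad'
  omega

lemma cyc3adj : ∀ u v : Fin 3, (cycleGraph 3).Adj u v ↔ u ≠ v := by decide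

lemma fin3cases : ∀ x : Fin 3, x = 0 ∨ x = 1 ∨ x = 2 := by decide

lemma cycAdj {k : ℕ} (u v : Fin (k + 3)) :
    (cycleGraph (k + 3)).Adj u v ↔ v = u - 1 ∨ v = u + 1 := by
  rw [cycleGraph_adj (n := k + 1)]
  constructor
  · rintro (h | h)
    · left; rw [← h, sub_sub_cancel]
    · right; rw [← h, add_sub_cancel]
  · rintro (h | h)
    · left; rw [h, sub_sub_cancel]
    · right; rw [h, add_sub_cancel_left]

lemma nbr {k : ℕ} {i : Fin 3} {j : Fin (k + 3)} {u : Fin 3 × Fin (k + 3)}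
    (h : (cardProd (cycleGraph 3) (cycleGraph (k + 3))).Adj (i, j) u) :
    u.1 ≠ i ∧ (u.2 = j - 1 ∨ u.2 = j + 1) := by
  obtain ⟨h1, h2⟩ := h
  exact ⟨fun e => ((cyc3adj i u.1).mp h1) e.symm, (cycAdj j u.2).mp h2⟩

/-- Sum of a column. -/
def colS {k : ℕ} (f : Fin 3 × Fin (k + 3) → ℕ) (j : Fin (k + 3)) : ℕ :=
  f (0, j) + f (1, j) + f (2, j)

lemma colIneq {k : ℕ} (f : Fin 3 × Fin (k + 3) → ℕ)
    (hf : IsRDRD (cardProd (cycleGraph 3) (cycleGraph (k + 3))) f) (j : Fin (k + 3)) :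
    2 + Fp' (colS f (j - 1)) (colS f j) ≤ colS f j + Fp' (colS f j) (colS f (j + 1)) := by
  obtain ⟨hle, hdom, hone, -⟩ := hf
  have h9 : ∀ jj : Fin (k + 3), colS f jj < 10 := fun jj => by
    have h1 := hle (0, jj); have h2 := hle (1, jj); have h3 := hle (2, jj)
    unfold colS; omega
  have H0 : ∀ i : Fin 3, f (i, j) = 0 →
      (∃ i', i' ≠ i ∧ (f (i', j - 1) = 3 ∨ f (i', j + 1) = 3)) ∨
      (∃ p q : Fin 3 × Fin (k + 3), p ≠ q ∧ p.1 ≠ i ∧ q.1 ≠ i ∧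
        (p.2 = j - 1 ∨ p.2 = j + 1) ∧ (q.2 = j - 1 ∨ q.2 = j + 1) ∧ f p = 2 ∧ f q = 2) := by
    intro i hi
    rcases hdom (i, j) hi with ⟨u, hadj, hu⟩ | ⟨u, w, huw, hau, haw, hu, hw⟩
    · obtain ⟨hne, hcol⟩ := nbr hadj
      left
      exact ⟨u.1, hne, by rcases hcol with h | h <;> rw [← h] <;> [left; right] <;> exact hu⟩
    · obtain ⟨hneu, hcu⟩ := nbr hau
      obtain ⟨hnew, hcw⟩ := nbr haw
      exact Or.inr ⟨u, w, huw, hneu, hnew, hcu, hcw, hu, hw⟩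
  have H1 : ∀ i : Fin 3, f (i, j) = 1 →
      ∃ i', i' ≠ i ∧ (2 ≤ f (i', j - 1) ∨ 2 ≤ f (i', j + 1)) := by
    intro i hi
    obtain ⟨u, hadj, hu⟩ := hone (i, j) hi
    obtain ⟨hne, hcol⟩ := nbr hadj
    exact ⟨u.1, hne, by rcases hcol with h | h <;> rw [← h] <;> [left; right] <;> exact hu⟩
  clear hdom hone
  refine arith' _ (h9 _) _ (h9 _) _ (h9 _)
    (notBad' _ _ _ _ _ _ _ _ _ (hle _) (hle _) (hle _) (hle _) (hle _) (hle _)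
      (hle _) (hle _) (hle _) ?_ ?_ ?_ ?_ ?_ ?_)
  · intro h
    rcases H0 0 h with ⟨i', hne, h3⟩ | ⟨⟨p1, p2⟩, ⟨q1, q2⟩, hpq, hp1, hq1, hp2, hq2, hp, hq⟩
    · rcases fin3cases i' with rfl | rfl | rfl <;> rcases h3 with h3 | h3 <;>
        first
          | exact absurd rfl hne
          | exact Or.inl (Or.inl h3)
          | exact Or.inl (Or.inr (Or.inl h3))
          | exact Or.inl (Or.inr (Or.inr (Or.inl h3)))
          | exact Or.inl (Or.inr (Or.inr (Or.inr h3)))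
    · rcases fin3cases p1 with rfl | rfl | rfl <;> rcases fin3cases q1 with rfl | rfl | rfl <;>
        rcases hp2 with rfl | rfl <;> rcases hq2 with rfl | rfl <;>
        first
          | exact absurd rfl hp1
          | exact absurd rfl hq1
          | exact Or.inr (Or.inl ⟨hp, hq⟩)
          | exact Or.inr (Or.inl ⟨hq, hp⟩)
          | exact Or.inr (Or.inr (Or.inl ⟨hp, hq⟩))
          | exact Or.inr (Or.inr (Or.inl ⟨hq, hp⟩))
          | exact Or.inr (Or.inr (Or.inr (Or.inl ⟨hp, hq⟩)))
          | exact Or.inr (Or.inr (Or.inr (Or.inl ⟨hq, hp⟩)))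
          | exact Or.inr (Or.inr (Or.inr (Or.inr (Or.inl ⟨hp, hq⟩))))
          | exact Or.inr (Or.inr (Or.inr (Or.inr (Or.inl ⟨hq, hp⟩))))
          | exact Or.inr (Or.inr (Or.inr (Or.inr (Or.inr (Or.inl ⟨hp, hq⟩)))))
          | exact Or.inr (Or.inr (Or.inr (Or.inr (Or.inr (Or.inl ⟨hq, hp⟩)))))
          | exact Or.inr (Or.inr (Or.inr (Or.inr (Or.inr (Or.inr ⟨hp, hq⟩)))))
          | exact Or.inr (Or.inr (Or.inr (Or.inr (Or.inr (Or.inr ⟨hq, hp⟩)))))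
          | exact absurd rfl hpq
  · intro h
    rcases H0 1 h with ⟨i', hne, h3⟩ | ⟨⟨p1, p2⟩, ⟨q1, q2⟩, hpq, hp1, hq1, hp2, hq2, hp, hq⟩
    · rcases fin3cases i' with rfl | rfl | rfl <;> rcases h3 with h3 | h3 <;>
        first
          | exact absurd rfl hne
          | exact Or.inl (Or.inl h3)
          | exact Or.inl (Or.inr (Or.inl h3))
          | exact Or.inl (Or.inr (Or.inr (Or.inl h3)))
          | exact Or.inl (Or.inr (Or.inr (Or.inr h3)))
    · rcases fin3cases p1 with rfl | rfl | rfl <;> rcases fin3cases q1 with rfl | rfl | rfl <;>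
        rcases hp2 with rfl | rfl <;> rcases hq2 with rfl | rfl <;>
        first
          | exact absurd rfl hp1
          | exact absurd rfl hq1
          | exact Or.inr (Or.inl ⟨hp, hq⟩)
          | exact Or.inr (Or.inl ⟨hq, hp⟩)
          | exact Or.inr (Or.inr (Or.inl ⟨hp, hq⟩))
          | exact Or.inr (Or.inr (Or.inl ⟨hq, hp⟩))
          | exact Or.inr (Or.inr (Or.inr (Or.inl ⟨hp, hq⟩)))
          | exact Or.inr (Or.inr (Or.inr (Or.inl ⟨hq, hp⟩)))
          | exact Or.inr (Or.inr (Or.inr (Or.inr (Or.inl ⟨hp, hq⟩))))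
          | exact Or.inr (Or.inr (Or.inr (Or.inr (Or.inl ⟨hq, hp⟩))))
          | exact Or.inr (Or.inr (Or.inr (Or.inr (Or.inr (Or.inl ⟨hp, hq⟩)))))
          | exact Or.inr (Or.inr (Or.inr (Or.inr (Or.inr (Or.inl ⟨hq, hp⟩)))))
          | exact Or.inr (Or.inr (Or.inr (Or.inr (Or.inr (Or.inr ⟨hp, hq⟩)))))
          | exact Or.inr (Or.inr (Or.inr (Or.inr (Or.inr (Or.inr ⟨hq, hp⟩)))))
          | exact absurd rfl hpq
  · intro h
    rcases H0 2 h with ⟨i', hne, h3⟩ | ⟨⟨p1, p2⟩, ⟨q1, q2⟩, hpq, hp1, hq1, hp2, hq2, hp, hq⟩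
    · rcases fin3cases i' with rfl | rfl | rfl <;> rcases h3 with h3 | h3 <;>
        first
          | exact absurd rfl hne
          | exact Or.inl (Or.inl h3)
          | exact Or.inl (Or.inr (Or.inl h3))
          | exact Or.inl (Or.inr (Or.inr (Or.inl h3)))
          | exact Or.inl (Or.inr (Or.inr (Or.inr h3)))
    · rcases fin3cases p1 with rfl | rfl | rfl <;> rcases fin3cases q1 with rfl | rfl | rfl <;>
        rcases hp2 with rfl | rfl <;> rcases hq2 with rfl | rfl <;>
        first
          | exact absurd rfl hp1
          | exact absurd rfl hq1
          | exact Or.inr (Or.inl ⟨hp, hq⟩)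
          | exact Or.inr (Or.inl ⟨hq, hp⟩)
          | exact Or.inr (Or.inr (Or.inl ⟨hp, hq⟩))
          | exact Or.inr (Or.inr (Or.inl ⟨hq, hp⟩))
          | exact Or.inr (Or.inr (Or.inr (Or.inl ⟨hp, hq⟩)))
          | exact Or.inr (Or.inr (Or.inr (Or.inl ⟨hq, hp⟩)))
          | exact Or.inr (Or.inr (Or.inr (Or.inr (Or.inl ⟨hp, hq⟩))))
          | exact Or.inr (Or.inr (Or.inr (Or.inr (Or.inl ⟨hq, hp⟩))))
          | exact Or.inr (Or.inr (Or.inr (Or.inr (Or.inr (Or.inl ⟨hp, hq⟩)))))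
          | exact Or.inr (Or.inr (Or.inr (Or.inr (Or.inr (Or.inl ⟨hq, hp⟩)))))
          | exact Or.inr (Or.inr (Or.inr (Or.inr (Or.inr (Or.inr ⟨hp, hq⟩)))))
          | exact Or.inr (Or.inr (Or.inr (Or.inr (Or.inr (Or.inr ⟨hq, hp⟩)))))
          | exact absurd rfl hpq
  · intro h
    obtain ⟨i', hne, h2⟩ := H1 0 h
    rcases fin3cases i' with rfl | rfl | rfl <;> rcases h2 with h2 | h2 <;>
      first
        | exact absurd rfl hne
        | exact Or.inl h2
        | exact Or.inr (Or.inl h2)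
        | exact Or.inr (Or.inr (Or.inl h2))
        | exact Or.inr (Or.inr (Or.inr h2))
  · intro h
    obtain ⟨i', hne, h2⟩ := H1 1 h
    rcases fin3cases i' with rfl | rfl | rfl <;> rcases h2 with h2 | h2 <;>
      first
        | exact absurd rfl hne
        | exact Or.inl h2
        | exact Or.inr (Or.inl h2)
        | exact Or.inr (Or.inr (Or.inl h2))
        | exact Or.inr (Or.inr (Or.inr h2))
  · intro h
    obtain ⟨i', hne, h2⟩ := H1 2 h
    rcases fin3cases i' with rfl | rfl | rfl <;> rcases h2 with h2 | h2 <;>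
      first
        | exact absurd rfl hne
        | exact Or.inl h2
        | exact Or.inr (Or.inl h2)
        | exact Or.inr (Or.inr (Or.inl h2))
        | exact Or.inr (Or.inr (Or.inr h2))

open Fin.CommRing in
lemma subne {k : ℕ} (j : Fin (k + 3)) : j - 1 ≠ j + 1 := by
  intro h
  have h2 : (2 : Fin (k + 3)) = 0 := by linear_combination -h
  have h3 := congrArg Fin.val h2
  rw [Fin.val_zero] at h3
  rw [show (2 : Fin (k + 3)) = ((2 : ℕ) : Fin (k + 3)) by norm_cast] at h3
  rw [Fin.val_cast_of_lt (by omega)] at h3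
  omega

/-- The lower bound. -/
lemma lowerBound {k : ℕ} (f : Fin 3 × Fin (k + 3) → ℕ)
    (hf : IsRDRD (cardProd (cycleGraph 3) (cycleGraph (k + 3))) f) :
    2 * (k + 3) ≤ ∑ v, f v := by
  have key := colIneq f hf
  have hsum : ∑ v, f v = ∑ j, colS f j := by
    rw [Fintype.sum_prod_type, Fin.sum_univ_three, ← Finset.sum_add_distrib,
      ← Finset.sum_add_distrib]
    rfl
  have hshift : ∑ j : Fin (k + 3), Fp' (colS f j) (colS f (j + 1))
      = ∑ j : Fin (k + 3), Fp' (colS f (j - 1)) (colS f j) := by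
    apply Fintype.sum_bijective (· + (1 : Fin (k + 3))) (Equiv.addRight 1).bijective
    intro j
    simp [add_sub_cancel_right]
  have h1 : ∑ j : Fin (k + 3), (2 + Fp' (colS f (j - 1)) (colS f j))
      ≤ ∑ j : Fin (k + 3), (colS f j + Fp' (colS f j) (colS f (j + 1))) :=
    Finset.sum_le_sum fun j _ => key j
  rw [Finset.sum_add_distrib, Finset.sum_add_distrib, Finset.sum_const, hshift] at h1
  simp only [Finset.card_univ, Fintype.card_fin, smul_eq_mul] at h1
  omega

/-- The upper bound construction. -/
def fup (k : ℕ) : Fin 3 × Fin (k + 3) → ℕ := fun p => if p.1 = 0 then 2 else 0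

lemma fup_isRDRD (k : ℕ) : IsRDRD (cardProd (cycleGraph 3) (cycleGraph (k + 3))) (fup k) := by
  refine ⟨fun v => ?_, fun v hv => ?_, fun v hv => ?_, fun v hv => ?_⟩
  · unfold fup; split <;> omega
  · obtain ⟨i, j⟩ := v
    have hi : i ≠ 0 := by intro h; rw [fup, h] at hv; simp at hv
    right
    refine ⟨(0, j - 1), (0, j + 1), ?_, ⟨(cyc3adj i 0).mpr hi, ?_⟩, ⟨(cyc3adj i 0).mpr hi, ?_⟩,
      rfl, rfl⟩
    · intro h
      exact subne j (congrArg Prod.snd h)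
    · exact (cycAdj j (j - 1)).mpr (Or.inl rfl)
    · exact (cycAdj j (j + 1)).mpr (Or.inr rfl)
  · exfalso; revert hv; unfold fup; split <;> omega
  · obtain ⟨i, j⟩ := v
    have hi : i ≠ 0 := by intro h; rw [fup, h] at hv; simp at hv
    rcases fin3cases i with rfl | rfl | rfl
    · exact absurd rfl hi
    · exact ⟨(2, j + 1), ⟨(cyc3adj 1 2).mpr (by decide),
        (cycAdj j (j + 1)).mpr (Or.inr rfl)⟩, rfl⟩
    · exact ⟨(1, j + 1), ⟨(cyc3adj 2 1).mpr (by decide),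
        (cycAdj j (j + 1)).mpr (Or.inr rfl)⟩, rfl⟩

lemma fup_sum (k : ℕ) : ∑ v, fup k v = 2 * (k + 3) := by
  rw [Fintype.sum_prod_type, Fin.sum_univ_three]
  simp [fup, Finset.sum_const, mul_comm]

theorem stmt10 (m : ℕ) (hm : 3 ≤ m) :
    gammaRdR (cardProd (SimpleGraph.cycleGraph 3) (SimpleGraph.cycleGraph m)) = 2 * m := by
  obtain ⟨k, rfl⟩ : ∃ k, m = k + 3 := ⟨m - 3, by omega⟩
  have hmem : 2 * (k + 3) ∈
      {w | ∃ f, IsRDRD (cardProd (cycleGraph 3) (cycleGraph (k + 3))) f ∧ ∑ v, f v = w} :=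
    ⟨fup k, fup_isRDRD k, fup_sum k⟩
  rw [gammaRdR]
  refine le_antisymm (Nat.sInf_le hmem) ?_
  obtain ⟨f, hf, hsum⟩ := Nat.sInf_mem (⟨_, hmem⟩ : Set.Nonempty _)
  rw [← hsum]
  exact lowerBound f hf
end

section
/- Let f be any RDRD-function of C_n ⊙ K₁ (n ≥ 3), with V(C_n) = {u₁,…,u_n} and u'_i the pendant neighbor of u_i. Setting f_j = f(u_j) + f(u'_j), we have f_j + f_{j+1} + f_{j+2} ≥ 7 for all j (indices mod n). The same bound holds for P_n ⊙ K₁ for 1 ≤ j ≤ n−2. -/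
open SimpleGraph Finset

section Helpers

variable {α : Type*} {G : SimpleGraph α} {f : α ⊕ α × Fin 1 → ℕ}

lemma corona_adj_inr (G : SimpleGraph α) (j : α) (a : Fin 1) (x : α ⊕ α × Fin 1) :
    (corona G (⊥ : SimpleGraph (Fin 1))).Adj (.inr (j, a)) x ↔ x = .inl j := by
  cases x with
  | inl u =>
    constructor
    · intro h; exact congrArg Sum.inl (h : u = j)
    · intro h; cases h; exact (rfl : j = j)
  | inr p =>
    obtain ⟨v, b⟩ := p
    constructor
    · intro h; exact absurd h.2 (by exact fun h => h.elim)
    · intro h; simp at h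

lemma corona_adj_inl (G : SimpleGraph α) (m : α) (x : α ⊕ α × Fin 1) :
    (corona G (⊥ : SimpleGraph (Fin 1))).Adj (.inl m) x ↔
      (∃ k, x = .inl k ∧ G.Adj m k) ∨ x = .inr (m, 0) := by
  cases x with
  | inl u =>
    constructor
    · intro h; exact Or.inl ⟨u, rfl, h⟩
    · rintro (⟨k, hk, hadj⟩ | h)
      · cases hk; exact hadj
      · simp at h
  | inr p =>
    obtain ⟨v, b⟩ := p
    constructor
    · intro h
      refine Or.inr ?_
      have hmv : m = v := h
      cases hmv
      have : b = 0 := Subsingleton.elim b 0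
      rw [this]
    · rintro (⟨k, hk, hadj⟩ | h)
      · simp at hk
      · rw [Sum.inr.injEq, Prod.mk.injEq] at h
        exact h.1.symm

lemma pend_pos (hf : IsRDRD (corona G (⊥ : SimpleGraph (Fin 1))) f) (j : α) :
    f (.inr (j, 0)) ≠ 0 := by
  intro h0
  obtain ⟨u, hadj, hu0⟩ := hf.2.2.2 _ h0
  rw [corona_adj_inr] at hadj
  subst hadj
  rcases hf.2.1 _ h0 with ⟨u, hadj, hu3⟩ | ⟨u, w, huw, hau, haw, hu2, hw2⟩
  · rw [corona_adj_inr] at hadj; subst hadj; omega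
  · rw [corona_adj_inr] at hau haw; subst hau; subst haw; exact huw rfl

lemma pair_lemma (hf : IsRDRD (corona G (⊥ : SimpleGraph (Fin 1))) f) (j : α) :
    2 ≤ f (.inl j) + f (.inr (j, 0)) ∧
      (f (.inl j) + f (.inr (j, 0)) ≤ 2 → f (.inl j) = 0 ∧ f (.inr (j, 0)) = 2) := by
  have hp := pend_pos hf j
  by_cases h1 : f (.inr (j, 0)) = 1
  · obtain ⟨u, hadj, hu⟩ := hf.2.2.1 _ h1
    rw [corona_adj_inr] at hadj
    subst hadj
    omega
  · omega

lemma key_lemma (hf : IsRDRD (corona G (⊥ : SimpleGraph (Fin 1))) f) (a m b : α)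
    (hnb : ∀ k, G.Adj m k → k = a ∨ k = b) :
    7 ≤ (f (.inl a) + f (.inr (a, 0))) + (f (.inl m) + f (.inr (m, 0))) +
        (f (.inl b) + f (.inr (b, 0))) := by
  by_contra hlt
  obtain ⟨ha2, ha⟩ := pair_lemma hf a
  obtain ⟨hm2, hm⟩ := pair_lemma hf m
  obtain ⟨hb2, hb⟩ := pair_lemma hf b
  have hae := ha (by omega)
  have hme := hm (by omega)
  have hbe := hb (by omega)
  rcases hf.2.1 _ hme.1 with ⟨u, hadj, hu3⟩ | ⟨u, w, huw, hau, haw, hu2, hw2⟩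
  · rw [corona_adj_inl] at hadj
    rcases hadj with ⟨k, hk, hadj⟩ | hk
    · subst hk
      rcases hnb k hadj with rfl | rfl <;> omega
    · subst hk; omega
  · rw [corona_adj_inl] at hau haw
    have hval : ∀ x : α ⊕ α × Fin 1,
        ((∃ k, x = .inl k ∧ G.Adj m k) ∨ x = .inr (m, 0)) → f x = 2 →
        x = Sum.inr (m, (0 : Fin 1)) := by
      rintro x (⟨k, rfl, hadj⟩ | rfl) hx2
      · rcases hnb k hadj with rfl | rfl <;> omega
      · rfl
    have := hval u hau hu2
    have := hval w haw hw2
    apply huw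
    rw [hval u hau hu2, hval w haw hw2]

end Helpers


lemma nat1 {n a b : ℕ} (ha : a < n) (hb : b < n) (h : ((n - b) + a) % n = 1) :
    a = (b + 1) % n := by
  rcases Nat.lt_or_ge ((n - b) + a) n with h' | h'
  · rw [Nat.mod_eq_of_lt h'] at h
    rw [show b + 1 = n by omega, Nat.mod_self]
    omega
  · rw [Nat.mod_eq_sub_mod h', Nat.mod_eq_of_lt (by omega)] at h
    rw [Nat.mod_eq_of_lt (by omega)]
    omega

lemma nat2 {n x y : ℕ} (hx : x < n) (hy : y < n) (h : (x + 1) % n = (y + 1) % n) :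
    x = y := by
  rcases Nat.lt_or_ge (x + 1) n with h1 | h1 <;>
    rcases Nat.lt_or_ge (y + 1) n with h2 | h2
  · rw [Nat.mod_eq_of_lt h1, Nat.mod_eq_of_lt h2] at h; omega
  · rw [Nat.mod_eq_of_lt h1, show y + 1 = n by omega, Nat.mod_self] at h; omega
  · rw [Nat.mod_eq_of_lt h2, show x + 1 = n by omega, Nat.mod_self] at h; omega
  · omega

lemma nat3 {n x : ℕ} (hn : 2 ≤ n) (hx : x < n) :
    ((x + 1) % n + 1) % n = (x + 2) % n := by
  rcases Nat.lt_or_ge (x + 1) n with h1 | h1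
  · rw [Nat.mod_eq_of_lt h1]
  · rw [show x + 1 = n by omega, Nat.mod_self, show x + 2 = n + 1 by omega,
      Nat.add_mod_left]

theorem stmt15 (n : ℕ) (hn : 3 ≤ n) :
    (∀ f : Fin n ⊕ Fin n × Fin 1 → ℕ,
      IsRDRD (corona (SimpleGraph.cycleGraph n) (⊥ : SimpleGraph (Fin 1))) f →
      ∀ j : Fin n,
        7 ≤ (f (.inl j) + f (.inr (j, 0))) +
            (f (.inl (j + ⟨1, by omega⟩)) + f (.inr (j + ⟨1, by omega⟩, 0))) +
            (f (.inl (j + ⟨2, by omega⟩)) + f (.inr (j + ⟨2, by omega⟩, 0)))) ∧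
    (∀ f : Fin n ⊕ Fin n × Fin 1 → ℕ,
      IsRDRD (corona (SimpleGraph.pathGraph n) (⊥ : SimpleGraph (Fin 1))) f →
      ∀ j : ℕ, ∀ h : j + 2 < n,
        7 ≤ (f (.inl ⟨j, by omega⟩) + f (.inr (⟨j, by omega⟩, 0))) +
            (f (.inl ⟨j + 1, by omega⟩) + f (.inr (⟨j + 1, by omega⟩, 0))) +
            (f (.inl ⟨j + 2, h⟩) + f (.inr (⟨j + 2, h⟩, 0)))) := by
  constructor
  · intro f hf j
    apply key_lemma hf j (j + ⟨1, by omega⟩) (j + ⟨2, by omega⟩)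
    intro k hadj
    rw [SimpleGraph.cycleGraph_adj'] at hadj
    rcases hadj with hs | hs
    · left
      apply Fin.ext
      have hs' : ((n - k.val) + (j.val + 1) % n) % n = 1 := hs
      have h2 := nat1 (Nat.mod_lt _ (by omega)) k.isLt hs'
      exact nat2 k.isLt j.isLt h2.symm
    · right
      apply Fin.ext
      have hs' : ((n - (j.val + 1) % n) + k.val) % n = 1 := hs
      have h2 := nat1 k.isLt (Nat.mod_lt _ (by omega)) hs'
      show k.val = (j.val + 2) % n
      rw [h2, nat3 (by omega) j.isLt]
  · intro f hf j hjn
    apply key_lemma hf ⟨j, by omega⟩ ⟨j + 1, by omega⟩ ⟨j + 2, hjn⟩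
    intro k hadj
    rw [SimpleGraph.pathGraph_adj] at hadj
    rcases hadj with hs | hs
    · right
      apply Fin.ext
      simpa using hs.symm
    · left
      apply Fin.ext
      simp only [Fin.val_mk] at hs ⊢
      omega
end
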